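/- arXiv:0807.0905 — 2 statements merged into one kernel-verified Lean document; each statement's English description precedes it below -/
import Mathlib

section
/- Let $f_l(t) = \sum_{i=0}^{l} t^i$ in $\mathbb{Z}[t]$. For integers $n \geq 2$ and odd integers $p, q$ with $3 \leq p \leq q$, the coefficient of $t^3$ in the polynomial $-t f_{2n-2} f_{p-1} f_{q-1} - t f_{2n-1} f_{p-2} f_{q-1} - t f_{2n-1} f_{p-1} f_{q-2} + (1+t) f_{2n-1} f_{p-1} f_{q-1}$ equals $-2$. -/
open Polynomial

noncomputable def f (l : ℕ) : Polynomial ℤ := ∑ i ∈ Finset.range (l + 1), X ^ i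

lemma coeff_f (l k : ℕ) : (f l).coeff k = if k ≤ l then 1 else 0 := by
  simp [f, coeff_X_pow, Finset.sum_ite_eq, Nat.lt_succ_iff]

set_option maxHeartbeats 2000000 in
theorem stmt1 (n p q : ℕ) (hn : 2 ≤ n) (hp : Odd p) (hq : Odd q)
    (hp3 : 3 ≤ p) (hpq : p ≤ q) :
    (-(X * f (2 * n - 2) * f (p - 1) * f (q - 1))
      - X * f (2 * n - 1) * f (p - 2) * f (q - 1)
      - X * f (2 * n - 1) * f (p - 1) * f (q - 2)
      + (1 + X) * f (2 * n - 1) * f (p - 1) * f (q - 1)).coeff 3 = -2 := by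
  have a1 : (1:ℕ) ≤ 2 * n - 1 := by omega
  have a2 : (2:ℕ) ≤ 2 * n - 1 := by omega
  have a3 : (3:ℕ) ≤ 2 * n - 1 := by omega
  have b1 : (1:ℕ) ≤ 2 * n - 2 := by omega
  have b2 : (2:ℕ) ≤ 2 * n - 2 := by omega
  have p1 : (1:ℕ) ≤ p - 1 := by omega
  have p2 : (2:ℕ) ≤ p - 1 := by omega
  have p1' : (1:ℕ) ≤ p - 2 := by omega
  have q1 : (1:ℕ) ≤ q - 1 := by omega
  have q2 : (2:ℕ) ≤ q - 1 := by omega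
  have q1' : (1:ℕ) ≤ q - 2 := by omega
  rcases eq_or_lt_of_le hp3 with hpe | hp4
  · rcases eq_or_lt_of_le hpq with hqe | hq4
    · subst hpe; rw [← hqe]
      simp [coeff_mul, Finset.Nat.sum_antidiagonal_eq_sum_range_succ_mk, coeff_f, coeff_X,
        coeff_one, Finset.sum_range_succ, a1, a2, a3, b1, b2]
    · have hq4 : 4 ≤ q := by omega
      have c2 : (2:ℕ) ≤ q - 2 := by omega
      have c3 : (3:ℕ) ≤ q - 1 := by omega
      subst hpe
      simp [coeff_mul, Finset.Nat.sum_antidiagonal_eq_sum_range_succ_mk, coeff_f, coeff_X,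
        coeff_one, Finset.sum_range_succ, a1, a2, a3, b1, b2, q1, q2, q1', c2, c3]
  · have hp4 : 4 ≤ p := by omega
    have d2 : (2:ℕ) ≤ p - 2 := by omega
    have d3 : (3:ℕ) ≤ p - 1 := by omega
    rcases eq_or_lt_of_le hpq with hqe | hq4
    · rw [← hqe]
      simp [coeff_mul, Finset.Nat.sum_antidiagonal_eq_sum_range_succ_mk, coeff_f, coeff_X,
        coeff_one, Finset.sum_range_succ, a1, a2, a3, b1, b2, p1, p2, p1', d2, d3]
    · have hq4 : 4 ≤ q := by omega
      have c2 : (2:ℕ) ≤ q - 2 := by omega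
      have c3 : (3:ℕ) ≤ q - 1 := by omega
      simp [coeff_mul, Finset.Nat.sum_antidiagonal_eq_sum_range_succ_mk, coeff_f, coeff_X,
        coeff_one, Finset.sum_range_succ, a1, a2, a3, b1, b2, p1, p2, p1', d2, d3,
        q1, q2, q1', c2, c3]
end

section
/- Let $f_l(t) = \sum_{i=0}^l t^i$. For odd integers $p, q$ with $5 \leq p \leq q$, the polynomial $-t f_{p-1} f_{q-1} + (1+t) f_{p+q-1}$ has some coefficient equal to $-2$; in particular not all its coefficients lie in $\{-1, 0, 1\}$. -/
open Polynomial

lemma key (p q : ℕ) (hp5 : 5 ≤ p) (hpq : p ≤ q) :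
    (-(X * f (p - 1) * f (q - 1)) + (1 + X) * f (p + q - 1)).coeff 4 = -2 := by
  have h1 : 3 ≤ p - 1 := by omega
  have h2 : 3 ≤ q - 1 := by omega
  have h3 : 4 ≤ p + q - 1 := by omega
  have hm : (f (p-1) * f (q-1)).coeff 3 = 4 := by
    rw [coeff_mul]
    rw [show Finset.HasAntidiagonal.antidiagonal 3 = {(0,3),(1,2),(2,1),(3,0)} from rfl]
    simp [coeff_f]
    omega
  have hX : (X * f (p - 1) * f (q - 1)).coeff 4 = 4 := by
    rw [mul_assoc, show (4:ℕ) = 3 + 1 from rfl, coeff_X_mul]; exact hm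
  simp [hX, add_mul, coeff_f, h3, show 3 ≤ p + q - 1 by omega]

theorem stmt11 (p q : ℕ) (hp : Odd p) (hq : Odd q) (hp5 : 5 ≤ p) (hpq : p ≤ q) :
    (∃ k : ℕ, (-(X * f (p - 1) * f (q - 1)) + (1 + X) * f (p + q - 1)).coeff k = -2) ∧
    ¬ (∀ k : ℕ, (-(X * f (p - 1) * f (q - 1)) + (1 + X) * f (p + q - 1)).coeff k
        ∈ ({-1, 0, 1} : Set ℤ)) := by
  have h := key p q hp5 hpq
  refine ⟨⟨4, h⟩, fun H => ?_⟩
  have := H 4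
  rw [h] at this
  simp at this
end
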